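/- Let (K,<) ⊆ (L,<) be a dense extension of ordered fields, let O_K and O_L be the convex rings of finite elements (natural valuation rings) viewed as additive groups, and suppose A is an additive subgroup of K with K = A ⊕ O_K (internal direct sum of ordered groups). Then K is dense in L if and only if A is also a group complement to O_L in L, i.e., L = A ⊕ O_L. -/

import Mathlib

/-- Let `(K,<) ⊆ (L,<)` be an extension of ordered fields (given by an order-preserving
field embedding `f`), let `O_K` and `O_L` be the natural valuation rings of finite elements
(as additive groups), and let `A` be an additive subgroup of `K` which is a group complement
to `O_K` in `K`. Then `K` is dense in `L` if and only if (the image of) `A` is also a group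
complement to `O_L` in `L`. -/
theorem stmt_14 {K L : Type*} [Field K] [LinearOrder K] [IsStrictOrderedRing K]
    [Field L] [LinearOrder L] [IsStrictOrderedRing L]
    (f : K →+* L) (hf : StrictMono f)
    (A : AddSubgroup K)
    (hinterK : ∀ a ∈ A, (∃ n : ℕ, |a| ≤ (n : K)) → a = 0)
    (hsumK : ∀ x : K, ∃ a ∈ A, ∃ n : ℕ, |x - a| ≤ (n : K)) :
    ((∀ a b : L, a < b → ∃ x : K, a < f x ∧ f x < b) ↔
      ((∀ a ∈ A, (∃ n : ℕ, |f a| ≤ (n : L)) → a = 0) ∧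
       (∀ y : L, ∃ a ∈ A, ∃ n : ℕ, |y - f a| ≤ (n : L)))) := by
  have habs : ∀ x : K, f |x| = |f x| := by
    intro x
    rcases le_total 0 x with h | h
    · have : (0:L) ≤ f x := by simpa using hf.monotone h
      rw [abs_of_nonneg h, abs_of_nonneg this]
    · have : f x ≤ 0 := by simpa using hf.monotone h
      rw [abs_of_nonpos h, abs_of_nonpos this, map_neg]
  constructor
  · intro hdense
    constructor
    · intro a ha ⟨n, hn⟩
      apply hinterK a ha
      refine ⟨n, ?_⟩
      have : f |a| ≤ f (n : K) := by rw [habs, map_natCast]; exact hn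
      exact hf.le_iff_le.mp this
    · intro y
      obtain ⟨x, hx1, hx2⟩ := hdense (y - 1) (y + 1) (by linarith)
      obtain ⟨a, ha, n, hn⟩ := hsumK x
      refine ⟨a, ha, n + 1, ?_⟩
      have h1 : |y - f x| ≤ 1 := by rw [abs_le]; constructor <;> linarith
      have h2 : |f x - f a| ≤ (n : L) := by
        rw [← map_sub, ← habs, ← map_natCast f n]
        exact hf.monotone hn
      calc |y - f a| ≤ |y - f x| + |f x - f a| := abs_sub_le _ _ _
        _ ≤ 1 + n := add_le_add h1 h2
        _ = ((n + 1 : ℕ) : L) := by push_cast; ring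
  · rintro ⟨_, h2⟩ a b hab
    -- Step 1: approximate any element of L within 1 by an element of K
    have approx : ∀ y : L, ∃ z : K, |y - f z| < 1 := by
      intro y
      obtain ⟨a₁, _, m, hm⟩ := h2 y
      set s := y - f a₁ with hs
      have hbdd : ∀ k : ℤ, (k : L) ≤ s → k ≤ (m : ℤ) := by
        intro k hk
        have : (k : L) ≤ (m : L) := le_trans hk (le_trans (le_abs_self s) hm)
        exact_mod_cast this
      obtain ⟨k₀, hk₀, hmax⟩ := Int.exists_greatest_of_bdd
        (P := fun k : ℤ => (k : L) ≤ s) ⟨(m : ℤ), hbdd⟩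
        ⟨-(m : ℤ), by push_cast; linarith [neg_abs_le s, hm]⟩
      refine ⟨a₁ + (k₀ : K), ?_⟩
      have hfz : f (a₁ + (k₀ : K)) = f a₁ + (k₀ : L) := by
        rw [map_add, map_intCast]
      have hlt : s < (k₀ : L) + 1 := by
        by_contra hcon
        push_neg at hcon
        have := hmax (k₀ + 1) (by push_cast; linarith)
        omega
      rw [hfz]
      have : y - (f a₁ + (k₀ : L)) = s - k₀ := by rw [hs]; ring
      rw [this, abs_lt]
      constructor <;> linarith
    -- Step 2: find w ∈ K with f w large
    set ε := b - a with hε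
    have hεpos : 0 < ε := by simp [hε]; linarith
    set c := (a + b) / 2 with hc
    set u := 2 / ε with hu
    obtain ⟨a₀, _, n, hn⟩ := h2 u
    set w := |a₀| + (n : K) + 1 with hw
    have hfw : f w = |f a₀| + (n : L) + 1 := by
      rw [hw, map_add, map_add, habs, map_natCast, map_one]
    have hfwpos : 0 < f w := by
      rw [hfw]
      positivity
    have hufw : u < f w := by
      have h3 : u - f a₀ ≤ (n : L) := le_trans (le_abs_self _) hn
      have h4 : f a₀ ≤ |f a₀| := le_abs_self _
      rw [hfw]; linarith
    have hwne : w ≠ 0 := by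
      intro h
      rw [h, map_zero] at hfwpos
      exact lt_irrefl _ hfwpos
    -- Step 3: approximate c * f w within 1, scale down
    obtain ⟨z, hz⟩ := approx (c * f w)
    have hfx : f (z / w) = f z / f w := map_div₀ f z w
    have hdiff : c - f (z / w) = (c * f w - f z) / f w := by
      rw [hfx]; field_simp
    have habslt : |c - f (z / w)| < 1 / f w := by
      rw [hdiff, abs_div, abs_of_pos hfwpos]
      gcongr
    have hupos : 0 < u := by rw [hu]; positivity
    have h1fw : 1 / f w < ε / 2 := by
      have h5 := one_div_lt_one_div_of_lt hupos hufw
      rwa [hu, one_div_div] at h5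
    have hfinal := habslt.trans h1fw
    rw [abs_lt] at hfinal
    obtain ⟨hl, hr⟩ := hfinal
    refine ⟨z / w, ?_, ?_⟩
    · have : c = (a + b) / 2 := hc
      have hεd : ε = b - a := hε
      linarith
    · have : c = (a + b) / 2 := hc
      have hεd : ε = b - a := hε
      linarith
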